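/- Let l be an odd prime, R a commutative ring, G' an abelian group, and σ an automorphism of G' with σ^l = id such that for every b ∈ G' the element σ(b)·b^{−1} is fixed by σ and satisfies (σ(b)·b^{−1})^l = 1. Extend σ to a ring automorphism of the group algebra R[G'] and let T' be the image of the trace map x ↦ Σ_{i=0}^{l−1} σ^i(x) on R[G']. Then for every x ∈ T' and every natural number v, the element x^{l^v} lies in l^v·T', i.e. x^{l^v} = l^v·y for some y ∈ T'. (Lemma 4.3(3).) -/

import Mathlib

namespace Stmt4Aux

open Finset

variable {R : Type*} [CommRing R] {G' : Type*} [CommGroup G'] (σ : MulAut G') (l : ℕ)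

/-- The trace map on the group algebra. -/
noncomputable def tr (w : MonoidAlgebra R G') : MonoidAlgebra R G' :=
  ∑ i ∈ Finset.range l, MonoidAlgebra.mapDomain ⇑(σ ^ i) w

lemma tr_add (w w' : MonoidAlgebra R G') :
    tr σ l (w + w') = tr σ l w + tr σ l w' := by
  unfold tr
  rw [← Finset.sum_add_distrib]
  exact Finset.sum_congr rfl fun i _ => MonoidAlgebra.mapDomain_add _ _ _

lemma tr_zero : tr σ l (0 : MonoidAlgebra R G') = 0 := by
  unfold tr
  refine Finset.sum_eq_zero fun i _ => MonoidAlgebra.mapDomain_zero _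

lemma tr_nsmul (n : ℕ) (w : MonoidAlgebra R G') :
    tr σ l (n • w) = n • tr σ l w := by
  unfold tr
  rw [Finset.smul_sum]
  exact Finset.sum_congr rfl fun i _ => MonoidAlgebra.mapDomain_smul _ n w

/-- Bundled trace as an additive monoid hom, to sum over finsets. -/
noncomputable def trHom : MonoidAlgebra R G' →+ MonoidAlgebra R G' where
  toFun := tr σ l
  map_zero' := tr_zero σ l
  map_add' := tr_add σ l

lemma tr_finset_sum {ι : Type*} (s : Finset ι) (f : ι → MonoidAlgebra R G') :
    tr σ l (∑ j ∈ s, f j) = ∑ j ∈ s, tr σ l (f j) :=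
  map_sum (trHom σ l) f s

lemma mapDomain_pow_succ (i : ℕ) (w : MonoidAlgebra R G') :
    MonoidAlgebra.mapDomain ⇑(σ ^ (i + 1)) w
      = MonoidAlgebra.mapDomain ⇑σ (MonoidAlgebra.mapDomain ⇑(σ ^ i) w) := by
  rw [show MonoidAlgebra.mapDomain ⇑σ (MonoidAlgebra.mapDomain ⇑(σ ^ i) w)
      = MonoidAlgebra.mapDomain (⇑σ ∘ ⇑(σ ^ i)) w from by ext; simp [Finsupp.mapDomain_comp]]
  congr 1
  ext b
  simp [pow_succ', MulAut.mul_apply]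

lemma tr_fixed (hσ : σ ^ l = 1) (w : MonoidAlgebra R G') :
    MonoidAlgebra.mapDomain ⇑σ (tr σ l w) = tr σ l w := by
  unfold tr
  have hsum : MonoidAlgebra.mapDomain ⇑σ (∑ i ∈ Finset.range l, MonoidAlgebra.mapDomain ⇑(σ ^ i) w)
      = ∑ i ∈ Finset.range l, MonoidAlgebra.mapDomain ⇑σ (MonoidAlgebra.mapDomain ⇑(σ ^ i) w) :=
    map_sum (MonoidAlgebra.mapDomainLinearMap ℕ (S := R) ⇑σ) _ _
  rw [hsum]
  have h1 : ∀ i, MonoidAlgebra.mapDomain ⇑σ (MonoidAlgebra.mapDomain ⇑(σ ^ i) w)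
      = MonoidAlgebra.mapDomain ⇑(σ ^ (i + 1)) w := fun i => (mapDomain_pow_succ σ i w).symm
  simp_rw [h1]
  set f : ℕ → MonoidAlgebra R G' := fun i => MonoidAlgebra.mapDomain ⇑(σ ^ i) w with hf
  have hfl : f l = f 0 := by rw [hf]; simp [hσ]
  have h2 : (∑ i ∈ Finset.range l, f (i + 1)) + f 0
      = (∑ i ∈ Finset.range l, f i) + f l := by
    rw [← Finset.sum_range_succ', Finset.sum_range_succ]
  rw [hfl] at h2
  exact add_right_cancel h2

lemma mapDomain_pow_fixed {P : MonoidAlgebra R G'}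
    (hP : MonoidAlgebra.mapDomain ⇑σ P = P) (i : ℕ) :
    MonoidAlgebra.mapDomain ⇑(σ ^ i) P = P := by
  induction i with
  | zero =>
      rw [show ⇑(σ ^ 0) = id by ext b; simp]
      ext; simp
  | succ n ih => rw [mapDomain_pow_succ, ih, hP]

lemma tr_mul_fixed (w P : MonoidAlgebra R G')
    (hP : MonoidAlgebra.mapDomain ⇑σ P = P) :
    tr σ l w * P = tr σ l (w * P) := by
  unfold tr
  rw [Finset.sum_mul]
  refine Finset.sum_congr rfl fun i _ => ?_
  rw [MonoidAlgebra.mapDomain_mul (σ ^ i), mapDomain_pow_fixed σ hP]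

lemma fixed_mul {P Q : MonoidAlgebra R G'}
    (hP : MonoidAlgebra.mapDomain ⇑σ P = P) (hQ : MonoidAlgebra.mapDomain ⇑σ Q = Q) :
    MonoidAlgebra.mapDomain ⇑σ (P * Q) = P * Q := by
  rw [MonoidAlgebra.mapDomain_mul σ, hP, hQ]

lemma fixed_pow {P : MonoidAlgebra R G'}
    (hP : MonoidAlgebra.mapDomain ⇑σ P = P) (n : ℕ) :
    MonoidAlgebra.mapDomain ⇑σ (P ^ n) = P ^ n := by
  induction n with
  | zero => simpa using MonoidAlgebra.mapDomain_one σ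
  | succ n ih => rw [pow_succ]; exact fixed_mul σ ih hP

section Single

variable {b : G'}

lemma sigma_pow_apply (hfix : ∀ b : G', σ (σ b * b⁻¹) = σ b * b⁻¹) (i : ℕ) (b : G') :
    (σ ^ i) b = b * (σ b * b⁻¹) ^ i := by
  induction i with
  | zero => simp
  | succ n ih =>
      have h1 : (σ ^ (n + 1)) b = σ ((σ ^ n) b) := by
        rw [pow_succ']; rfl
      rw [h1, ih, map_mul, map_pow, hfix, pow_succ]
      set X := σ b * b⁻¹ with hX
      have hσb : σ b = b * X := by
        rw [hX, mul_comm (σ b) b⁻¹, mul_inv_cancel_left]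
      rw [hσb, mul_assoc, mul_comm X (X ^ n)]

end Single

section Nrm

variable (c : G')

/-- The "norm" element `Σ_{i<l} c^i` of the group algebra. -/
noncomputable def nrm : MonoidAlgebra R G' :=
  ∑ i ∈ Finset.range l, MonoidAlgebra.single (c ^ i) (1 : R)

lemma single_mul_nrm (hcl : c ^ l = 1) :
    MonoidAlgebra.single c (1 : R) * nrm l c = nrm l c := by
  unfold nrm
  rw [Finset.mul_sum]
  have h1 : ∀ i ∈ Finset.range l,
      MonoidAlgebra.single c (1 : R) * MonoidAlgebra.single (c ^ i) (1 : R)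
        = MonoidAlgebra.single (c ^ (i + 1)) (1 : R) := by
    intro i _
    rw [MonoidAlgebra.single_mul_single, one_mul, ← pow_succ']
  rw [Finset.sum_congr rfl h1]
  set f : ℕ → MonoidAlgebra R G' := fun i => MonoidAlgebra.single (c ^ i) (1 : R) with hf
  have hfl : f l = f 0 := by rw [hf]; simp [hcl]
  have h2 : (∑ i ∈ Finset.range l, f (i + 1)) + f 0
      = (∑ i ∈ Finset.range l, f i) + f l := by
    rw [← Finset.sum_range_succ', Finset.sum_range_succ]
  rw [hfl] at h2
  exact add_right_cancel h2

lemma single_pow_mul_nrm (hcl : c ^ l = 1) (i : ℕ) :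
    MonoidAlgebra.single (c ^ i) (1 : R) * nrm l c = nrm l c := by
  induction i with
  | zero =>
      rw [pow_zero, show (MonoidAlgebra.single (1 : G') (1 : R)) = 1 from rfl, one_mul]
  | succ n ih =>
      have h : MonoidAlgebra.single (c ^ (n + 1)) (1 : R)
          = MonoidAlgebra.single c (1 : R) * MonoidAlgebra.single (c ^ n) (1 : R) := by
        rw [MonoidAlgebra.single_mul_single, one_mul, ← pow_succ']
      rw [h, mul_assoc, ih, single_mul_nrm l c hcl]

lemma nrm_sq (hcl : c ^ l = 1) : nrm (R := R) l c * nrm l c = l • nrm (R := R) l c := by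
  have h : nrm l c * nrm l c
      = ∑ i ∈ Finset.range l, MonoidAlgebra.single (c ^ i) (1 : R) * nrm l c := by
    rw [← Finset.sum_mul]
    rfl
  rw [h, Finset.sum_congr rfl fun i _ => single_pow_mul_nrm l c hcl i,
    Finset.sum_const, Finset.card_range]

lemma nrm_pow (hcl : c ^ l = 1) (k : ℕ) :
    nrm l c ^ (k + 1) = l ^ k • nrm (R := R) l c := by
  induction k with
  | zero => simp
  | succ n ih =>
      rw [pow_succ, ih, smul_mul_assoc, nrm_sq l c hcl, smul_smul, pow_succ]

end Nrm

lemma aut_pow_fixed {g : G'} (hg : σ g = g) (i : ℕ) : (σ ^ i) g = g := by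
  induction i with
  | zero => simp
  | succ n ih =>
      have h1 : (σ ^ (n + 1)) g = σ ((σ ^ n) g) := by rw [pow_succ']; rfl
      rw [h1, ih, hg]

lemma tr_single (hfix : ∀ b : G', σ (σ b * b⁻¹) = σ b * b⁻¹) (b : G') (r : R) :
    tr σ l (MonoidAlgebra.single b r)
      = MonoidAlgebra.single b r * nrm l (σ b * b⁻¹) := by
  unfold tr nrm
  rw [Finset.mul_sum]
  refine Finset.sum_congr rfl fun i _ => ?_
  calc MonoidAlgebra.mapDomain ⇑(σ ^ i) (MonoidAlgebra.single b r)
      = MonoidAlgebra.single ((σ ^ i) b) r := MonoidAlgebra.mapDomain_single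
    _ = MonoidAlgebra.single (b * (σ b * b⁻¹) ^ i) r := by
        rw [sigma_pow_apply σ hfix]
    _ = MonoidAlgebra.single b r * MonoidAlgebra.single ((σ b * b⁻¹) ^ i) 1 := by
        rw [MonoidAlgebra.single_mul_single, mul_one]

lemma tr_single_fixed {g : G'} (hg : σ g = g) (r : R) :
    tr σ l (MonoidAlgebra.single g r) = l • MonoidAlgebra.single g r := by
  unfold tr
  have h : ∀ i ∈ Finset.range l,
      MonoidAlgebra.mapDomain ⇑(σ ^ i) (MonoidAlgebra.single g r)
        = MonoidAlgebra.single g r := by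
    intro i _
    calc MonoidAlgebra.mapDomain ⇑(σ ^ i) (MonoidAlgebra.single g r)
        = MonoidAlgebra.single ((σ ^ i) g) r := MonoidAlgebra.mapDomain_single
      _ = MonoidAlgebra.single g r := by rw [aut_pow_fixed σ hg]
  rw [Finset.sum_congr rfl h, Finset.sum_const, Finset.card_range]

lemma diag (hl3 : 3 ≤ l)
    (hfix : ∀ b : G', σ (σ b * b⁻¹) = σ b * b⁻¹)
    (hord : ∀ b : G', (σ b * b⁻¹) ^ l = 1) (b : G') (r : R) :
    ∃ u : MonoidAlgebra R G',
      (tr σ l (MonoidAlgebra.single b r)) ^ l = l • tr σ l u := by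
  obtain ⟨k, hk⟩ : ∃ k, l = k + 3 := ⟨l - 3, by omega⟩
  set c := σ b * b⁻¹ with hc
  have hcl : c ^ l = 1 := hord b
  have hcfix : σ c = c := hfix b
  have hσb : σ b = b * c := by rw [hc, mul_comm (σ b) b⁻¹, mul_inv_cancel_left]
  have hblfix : ∀ i : ℕ, σ (b ^ l * c ^ i) = b ^ l * c ^ i := by
    intro i
    rw [map_mul, map_pow, map_pow, hcfix]
    congr 1
    rw [hσb, mul_pow, hcl, mul_one]
  set U : MonoidAlgebra R G' :=
    ∑ i ∈ Finset.range l, MonoidAlgebra.single (b ^ l * c ^ i) (r ^ l) with hU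
  have htrU : tr σ l U = l • (MonoidAlgebra.single (b ^ l) (r ^ l) * nrm l c) := by
    rw [hU, tr_finset_sum]
    rw [Finset.sum_congr rfl fun i _ => tr_single_fixed σ l (hblfix i) (r ^ l),
      ← Finset.smul_sum]
    congr 1
    unfold nrm
    rw [Finset.mul_sum]
    exact Finset.sum_congr rfl fun i _ => by
      rw [MonoidAlgebra.single_mul_single, mul_one]
  have e1 : nrm l c ^ l = l ^ (k + 2) • nrm (R := R) l c := by
    have h := nrm_pow (R := R) l c hcl (k + 2)
    rwa [show k + 2 + 1 = l by omega] at h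
  refine ⟨l ^ k • U, ?_⟩
  rw [tr_nsmul, htrU, smul_smul, smul_smul,
    tr_single σ l hfix b r, mul_pow, MonoidAlgebra.single_pow, e1, mul_smul_comm]
  congr 1
  rw [hk]
  ring

lemma core (hl : l.Prime) (hodd : Odd l) (hσ : σ ^ l = 1)
    (hfix : ∀ b : G', σ (σ b * b⁻¹) = σ b * b⁻¹)
    (hord : ∀ b : G', (σ b * b⁻¹) ^ l = 1) (w : MonoidAlgebra R G') :
    ∃ u : MonoidAlgebra R G', (tr σ l w) ^ l = l • tr σ l u := by
  have hl2 : l ≠ 2 := by rintro rfl; exact (by decide : ¬ Odd 2) hodd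
  have hl3 : 3 ≤ l := by have := hl.two_le; omega
  induction w using MonoidAlgebra.induction with
  | zero =>
      refine ⟨0, ?_⟩
      rw [tr_zero, zero_pow (by omega : l ≠ 0), smul_zero]
  | single_add b r f hbf hr ih =>
      obtain ⟨u', hu'⟩ := ih
      set A : MonoidAlgebra R G' := tr σ l (MonoidAlgebra.single b r) with hA
      set B : MonoidAlgebra R G' := tr σ l f with hB
      have htr : tr σ l (MonoidAlgebra.single b r + f) = A + B := tr_add σ l _ _
      have hAf : MonoidAlgebra.mapDomain ⇑σ A = A := tr_fixed σ l hσ _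
      have hBf : MonoidAlgebra.mapDomain ⇑σ B = B := tr_fixed σ l hσ _
      have hmem : ∀ m : ℕ, m ∈ Finset.range (l + 1) →
          ∃ u : MonoidAlgebra R G',
            A ^ m * B ^ (l - m) * (l.choose m : MonoidAlgebra R G') = l • tr σ l u := by
        intro m hm
        rcases eq_or_ne m l with rfl | hml
        · obtain ⟨u, hu⟩ := diag σ _ hl3 hfix hord b r
          refine ⟨u, ?_⟩
          rw [Nat.sub_self, pow_zero, mul_one, Nat.choose_self, Nat.cast_one, mul_one]
          exact hu
        rcases Nat.eq_zero_or_pos m with rfl | hm0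
        · refine ⟨u', ?_⟩
          rw [pow_zero, one_mul, Nat.sub_zero, Nat.choose_zero_right, Nat.cast_one, mul_one]
          exact hu'
        · have hmlt : m < l :=
            lt_of_le_of_ne (Nat.lt_succ_iff.mp (Finset.mem_range.mp hm)) hml
          obtain ⟨n, rfl⟩ : ∃ n, m = n + 1 := ⟨m - 1, by omega⟩
          obtain ⟨t, ht⟩ := hl.dvd_choose_self (by omega : n + 1 ≠ 0) hmlt
          have hP : MonoidAlgebra.mapDomain ⇑σ (A ^ n * B ^ (l - (n + 1)))
              = A ^ n * B ^ (l - (n + 1)) :=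
            fixed_mul σ (fixed_pow σ hAf n) (fixed_pow σ hBf (l - (n + 1)))
          have h1 : A ^ (n + 1) * B ^ (l - (n + 1))
              = tr σ l (MonoidAlgebra.single b r * (A ^ n * B ^ (l - (n + 1)))) := by
            rw [← tr_mul_fixed σ l _ _ hP, ← hA, pow_succ]
            ring
          refine ⟨t • (MonoidAlgebra.single b r * (A ^ n * B ^ (l - (n + 1)))), ?_⟩
          rw [h1, ht, tr_nsmul, smul_smul, mul_comm, ← nsmul_eq_mul]
      choose uu huu using hmem
      refine ⟨∑ m ∈ (Finset.range (l + 1)).attach, uu m.1 m.2, ?_⟩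
      have hgoal : (A + B) ^ l
          = l • tr σ l (∑ m ∈ (Finset.range (l + 1)).attach, uu m.1 m.2) := by
        rw [add_pow, tr_finset_sum, Finset.smul_sum,
          ← Finset.sum_attach (Finset.range (l + 1))
            (fun m => A ^ m * B ^ (l - m) * (l.choose m : MonoidAlgebra R G'))]
        exact Finset.sum_congr rfl fun m _ => huu m.1 m.2
      rw [← htr] at hgoal
      exact hgoal

end Stmt4Aux

/-- **Lemma 4.3(3)**: let `l` be an odd prime, `R` a commutative ring, `G'` an abelian
group and `σ` an automorphism of `G'` with `σ^l = 1` such that `σ(b)·b⁻¹` is fixed by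
`σ` and `(σ(b)·b⁻¹)^l = 1` for all `b`. Let `T'` be the image of the trace map
`x ↦ Σ_{i=0}^{l−1} σ^i(x)` on the group algebra `R[G']`. Then for `x ∈ T'` and any
`v : ℕ` one has `x^{l^v} ∈ l^v·T'`. -/
theorem stmt4 (l : ℕ) (hl : l.Prime) (hodd : Odd l)
    (R : Type*) [CommRing R] (G' : Type*) [CommGroup G']
    (σ : MulAut G') (hσ : σ ^ l = 1)
    (hfix : ∀ b : G', σ (σ b * b⁻¹) = σ b * b⁻¹)
    (hord : ∀ b : G', (σ b * b⁻¹) ^ l = 1)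
    (x : MonoidAlgebra R G')
    (hx : ∃ w : MonoidAlgebra R G',
      x = ∑ i ∈ Finset.range l, MonoidAlgebra.mapDomain ⇑(σ ^ i) w)
    (v : ℕ) :
    ∃ y : MonoidAlgebra R G',
      (∃ w : MonoidAlgebra R G',
        y = ∑ i ∈ Finset.range l, MonoidAlgebra.mapDomain ⇑(σ ^ i) w) ∧
      x ^ (l ^ v) = (l ^ v : ℕ) • y := by
  induction v with
  | zero =>
      obtain ⟨w, hw⟩ := hx
      exact ⟨x, ⟨w, hw⟩, by simp⟩
  | succ v ih =>
      obtain ⟨y, ⟨u, hy⟩, hxy⟩ := ih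
      have hy' : y = Stmt4Aux.tr σ l u := hy
      obtain ⟨z, hz⟩ := Stmt4Aux.core σ l hl hodd hσ hfix hord u
      have hyl : y ^ l = l • Stmt4Aux.tr σ l z := by rw [hy']; exact hz
      refine ⟨(l ^ (v * (l - 1))) • Stmt4Aux.tr σ l z,
        ⟨l ^ (v * (l - 1)) • z, ?_⟩, ?_⟩
      · exact (Stmt4Aux.tr_nsmul σ l _ z).symm
      · have h1 : x ^ l ^ (v + 1) = (x ^ l ^ v) ^ l := by
          rw [← pow_mul, pow_succ]
        rw [h1, hxy, smul_pow, hyl]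
        simp only [smul_smul]
        congr 1
        obtain ⟨k, rfl⟩ : ∃ k, l = k + 1 := ⟨l - 1, by have := hl.pos; omega⟩
        simp only [Nat.add_sub_cancel]
        rw [← pow_mul, ← pow_succ, ← pow_add]
        congr 1
        ring
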